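/- Let X ∈ L_n be a fixed point of T that is not a vertex of L_n. Then for every ε > 0 there exists Y ∈ L_n with ‖Y − X‖ < ε (Frobenius norm) and Y·Y > X·X. -/

import Mathlib

def elliptope (n : ℕ) : Set (Matrix (Fin n) (Fin n) ℝ) :=
  {X | X.PosSemidef ∧ ∀ i, X i i = 1}

def frob {n : ℕ} (A B : Matrix (Fin n) (Fin n) ℝ) : ℝ :=
  ∑ i, ∑ j, A i j * B i j

open Finset Matrix

namespace Stmt17Aux

variable {n : ℕ}

lemma dot_sum (u : Fin n → ℝ) (f : Fin n → Fin n → ℝ) :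
    u ⬝ᵥ (∑ j, f j) = ∑ j, u ⬝ᵥ f j := by
  simp only [dotProduct, Finset.sum_apply, Finset.mul_sum]
  exact Finset.sum_comm

lemma dot_self_nonneg (x : Fin n → ℝ) : 0 ≤ x ⬝ᵥ x :=
  Finset.sum_nonneg fun k _ => mul_self_nonneg _

lemma dot_self_eq_zero' {x : Fin n → ℝ} (h : x ⬝ᵥ x = 0) : x = 0 := by
  funext k
  have h2 := (Finset.sum_eq_zero_iff_of_nonneg
    (fun k _ => mul_self_nonneg (x k))).mp h k (Finset.mem_univ k)
  exact mul_self_eq_zero.mp h2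

lemma gram_mem (w : Fin n → Fin n → ℝ) (hw : ∀ i, w i ⬝ᵥ w i = 1) :
    Matrix.of (fun i j => w i ⬝ᵥ w j) ∈ elliptope n := by
  constructor
  · have h : Matrix.of (fun i j => w i ⬝ᵥ w j)
        = (Matrix.of fun k i => w i k)ᴴ * (Matrix.of fun k i => w i k) := by
      ext i j
      simp [Matrix.mul_apply, Matrix.conjTranspose_apply, dotProduct]
    rw [h]
    exact Matrix.posSemidef_conjTranspose_mul_self _
  · intro i; exact hw i

lemma sum_sum_offdiag (p : Fin n) (D : Fin n → Fin n → ℝ)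
    (hsymm : ∀ i j, D i j = D j i)
    (h0 : ∀ i j, i ≠ p → j ≠ p → D i j = 0) :
    ∑ i, ∑ j, D i j = 2 * (∑ j, D p j) - D p p := by
  have hrow : ∀ i, i ≠ p → ∑ j, D i j = D i p := by
    intro i hi
    exact Finset.sum_eq_single p (fun j _ hj => h0 i j hi hj) (by simp)
  have h1 : ∑ i, ∑ j, D i j = (∑ j, D p j) + ∑ i ∈ Finset.univ.erase p, ∑ j, D i j :=
    (Finset.add_sum_erase _ _ (Finset.mem_univ p)).symm
  have h2 : ∑ i ∈ Finset.univ.erase p, ∑ j, D i j = ∑ i ∈ Finset.univ.erase p, D i p :=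
    Finset.sum_congr rfl fun i hi => hrow i (Finset.ne_of_mem_erase hi)
  have h3 : D p p + ∑ i ∈ Finset.univ.erase p, D i p = ∑ i, D i p :=
    Finset.add_sum_erase _ (fun i => D i p) (Finset.mem_univ p)
  have h4 : ∑ i, D i p = ∑ j, D p j := Finset.sum_congr rfl fun i _ => hsymm i p
  rw [h1, h2]
  linarith [h3, h4]

lemma hdot_of_E (X : Matrix (Fin n) (Fin n) ℝ) (v : Fin n → Fin n → ℝ)
    (E : ∀ i, (∑ j, X i j • v j) = (∑ j, X i j * X i j) • v i)
    (x : Fin n → ℝ) (i : Fin n) :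
    ∑ j, X i j * (x ⬝ᵥ v j) = (∑ j, X i j * X i j) * (x ⬝ᵥ v i) := by
  have h1 : x ⬝ᵥ (∑ j, X i j • v j) = ∑ j, X i j * (x ⬝ᵥ v j) := by
    rw [dot_sum]
    exact Finset.sum_congr rfl fun j _ => by rw [dotProduct_smul]; simp [smul_eq_mul]
  rw [← h1, E i, dotProduct_smul, smul_eq_mul]

lemma arith1 {s : ℝ} (hs0 : 0 < s) (hs1 : s ≤ 1) : (1-s)^2 ≤ 1-s := by nlinarith

lemma arith_ham {a s : ℝ} (hage : 1 - s ≤ a) (ha1 : a ≤ 1) (hs0 : 0 < s) :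
    (a - 1)^2 ≤ s^2 := by nlinarith

lemma arith2 {a s Lp Lq : ℝ} (ham : (a-1)^2 ≤ s^2) (hs0 : 0 < s) (hs1 : s ≤ 1)
    (hLp1 : 1 ≤ Lp) (hLq0 : 0 ≤ Lq) :
    2*((a-1)^2*(Lp-1) + s*Lq) ≤ s*(2*(Lp-1+Lq)) := by
  have h1 : s^2 ≤ s := by nlinarith
  have h2 : (a-1)^2 ≤ s := le_trans ham h1
  have h3 : (a-1)^2*(Lp-1) ≤ s*(Lp-1) :=
    mul_le_mul_of_nonneg_right h2 (by linarith)
  linarith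

lemma arith3 {x s K ε : ℝ} (hb : x ≤ s*K) (hsε : s*(2*(K+1)) ≤ ε^2)
    (hs0 : 0 < s) (hK0 : 0 ≤ K) : x < ε^2 := by nlinarith [mul_nonneg hs0.le hK0]

lemma arith4 {s Lp Lq : ℝ} (hs0 : 0 < s) (hL : Lp ≤ Lq) :
    0 < 2*(s*(Lq - Lp + 1)) := by nlinarith

set_option maxHeartbeats 1000000 in
lemma main_aux (X : Matrix (Fin n) (Fin n) ℝ) (v : Fin n → Fin n → ℝ)
    (hXv : ∀ i j, X i j = v i ⬝ᵥ v j)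
    (hunit : ∀ i, v i ⬝ᵥ v i = 1)
    (E : ∀ i, (∑ j, X i j • v j) = (∑ j, X i j * X i j) • v i)
    (p q : Fin n) (hpq : (X p q)^2 < 1)
    (hL : ∑ j, X p j * X p j ≤ ∑ j, X q j * X q j)
    {ε : ℝ} (hε : 0 < ε) :
    ∃ Y ∈ elliptope n, Real.sqrt (frob (Y - X) (Y - X)) < ε ∧ frob X X < frob Y Y := by
  classical
  set c : ℝ := X p q with hc
  set Lp : ℝ := ∑ j, X p j * X p j with hLp
  set Lq : ℝ := ∑ j, X q j * X q j with hLq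
  have hsymX : ∀ i j, X i j = X j i := fun i j => by rw [hXv, hXv, dotProduct_comm]
  have hLp1 : 1 ≤ Lp := by
    have h : X p p * X p p ≤ Lp := Finset.single_le_sum (f := fun j => X p j * X p j)
      (fun j _ => mul_self_nonneg _) (Finset.mem_univ p)
    have hXpp : X p p = 1 := by rw [hXv]; exact hunit p
    rw [hXpp] at h; linarith
  have hLq0 : 0 ≤ Lq := Finset.sum_nonneg fun j _ => mul_self_nonneg _
  -- the direction u
  have hc2 : 0 < 1 - c^2 := by linarith
  set r : ℝ := Real.sqrt (1 - c^2) with hrdef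
  have hr : 0 < r := Real.sqrt_pos.mpr hc2
  have hr2 : r^2 = 1 - c^2 := Real.sq_sqrt hc2.le
  set z : Fin n → ℝ := v q - c • v p with hz
  set u : Fin n → ℝ := r⁻¹ • z with hu
  have hqp : v q ⬝ᵥ v p = c := by rw [← hXv, ← hsymX]
  have hpq' : v p ⬝ᵥ v q = c := by rw [← hXv]
  have hzp : z ⬝ᵥ v p = 0 := by
    rw [hz, sub_dotProduct, smul_dotProduct, hqp, hunit, smul_eq_mul]; ring
  have hzz : z ⬝ᵥ z = 1 - c^2 := by
    simp only [hz, sub_dotProduct, dotProduct_sub, smul_dotProduct, dotProduct_smul,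
      smul_eq_mul, hqp, hpq', hunit]
    ring
  have hup : u ⬝ᵥ v p = 0 := by
    simp only [hu, smul_dotProduct, smul_eq_mul, hzp]; ring
  have hpu : v p ⬝ᵥ u = 0 := by rw [dotProduct_comm]; exact hup
  have huu : u ⬝ᵥ u = 1 := by
    simp only [hu, smul_dotProduct, dotProduct_smul, smul_eq_mul]
    rw [hzz]
    have : r⁻¹ * (r⁻¹ * (1 - c^2)) = r⁻¹ * r⁻¹ * r^2 := by rw [hr2]; ring
    rw [this, pow_two]
    field_simp
  -- key sums
  have hdot := hdot_of_E X v E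
  have hSpu : ∑ j, X p j * (u ⬝ᵥ v j) = 0 := by rw [hdot u p, hup]; ring
  have hcL : c * Lp = c * Lq := by
    have h1 : ∑ j, X p j * (v q ⬝ᵥ v j) = Lp * c := by rw [hdot (v q) p, hqp]
    have h2 : ∑ j, X q j * (v p ⬝ᵥ v j) = Lq * c := by rw [hdot (v p) q, hpq']
    have h3 : ∑ j, X p j * (v q ⬝ᵥ v j) = ∑ j, X q j * (v p ⬝ᵥ v j) :=
      Finset.sum_congr rfl fun j _ => by rw [← hXv, ← hXv]; ring
    rw [h1] at h3; rw [h2] at h3; linarith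
  have hSqX : ∑ j, X q j * X p j = Lq * c := by
    have h2 : ∑ j, X q j * (v p ⬝ᵥ v j) = Lq * c := by rw [hdot (v p) q, hpq']
    rw [← h2]
    exact Finset.sum_congr rfl fun j _ => by rw [← hXv]
  have huvj : ∀ j, u ⬝ᵥ v j = r⁻¹ * (X q j - c * X p j) := by
    intro j
    simp only [hu, hz, smul_dotProduct, sub_dotProduct, smul_eq_mul, ← hXv]
  have hSuu : ∑ j, (u ⬝ᵥ v j) * (u ⬝ᵥ v j) = Lq := by
    have hexp : ∀ j, (u ⬝ᵥ v j) * (u ⬝ᵥ v j)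
        = r⁻¹ * r⁻¹ * (X q j * X q j) - (r⁻¹ * r⁻¹ * (2*c)) * (X q j * X p j)
          + (r⁻¹ * r⁻¹ * c^2) * (X p j * X p j) := by
      intro j; rw [huvj j]; ring
    rw [Finset.sum_congr rfl fun j _ => hexp j]
    rw [Finset.sum_add_distrib, Finset.sum_sub_distrib, ← Finset.mul_sum,
      ← Finset.mul_sum, ← Finset.mul_sum, ← hLq, ← hLp, hSqX]
    have hc2L : c^2 * Lp = c^2 * Lq := by
      rw [pow_two, mul_assoc, hcL, ← mul_assoc]
    have hrr : r⁻¹ * r⁻¹ * (1 - c^2) = 1 := by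
      rw [← hr2, pow_two]; field_simp
    linear_combination (r⁻¹*r⁻¹) * hc2L + Lq * hrr
  clear_value c r z u
  -- the parameter s and coefficients a b
  set K : ℝ := 2*(Lp - 1 + Lq) with hK
  have hK0 : 0 ≤ K := by rw [hK]; linarith
  obtain ⟨s, hs0, hs1, hsε⟩ : ∃ s : ℝ, 0 < s ∧ s ≤ 1 ∧ s * (2*(K+1)) ≤ ε^2 := by
    refine ⟨min 1 (ε^2/(2*(K+1))), lt_min one_pos (by positivity), min_le_left _ _, ?_⟩
    have h := min_le_right 1 (ε^2/(2*(K+1)))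
    have h2 : (0:ℝ) < 2*(K+1) := by linarith
    calc min 1 (ε^2/(2*(K+1))) * (2*(K+1)) ≤ (ε^2/(2*(K+1))) * (2*(K+1)) :=
          mul_le_mul_of_nonneg_right h h2.le
      _ = ε^2 := by field_simp
  set b : ℝ := Real.sqrt s with hbdef
  have hb0 : 0 < b := Real.sqrt_pos.mpr hs0
  have hb2 : b^2 = s := Real.sq_sqrt hs0.le
  set a : ℝ := Real.sqrt (1 - s) with hadef
  have hs1' : (0:ℝ) ≤ 1 - s := by linarith
  have ha2 : a^2 = 1 - s := Real.sq_sqrt hs1'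
  have ha0 : 0 ≤ a := Real.sqrt_nonneg _
  have ha1 : a ≤ 1 := by
    rw [hadef]
    calc Real.sqrt (1 - s) ≤ Real.sqrt 1 := Real.sqrt_le_sqrt (by linarith)
      _ = 1 := Real.sqrt_one
  have hage : 1 - s ≤ a := by
    have h1 : (1-s)^2 ≤ 1 - s := arith1 hs0 hs1
    have h2 := Real.sqrt_le_sqrt h1
    rwa [Real.sqrt_sq hs1'] at h2
  clear_value a b
  have ham : (a - 1)^2 ≤ s^2 := arith_ham hage ha1 hs0
  -- the vector w and family W
  set w : Fin n → ℝ := a • v p + b • u with hw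
  have hwvp : w ⬝ᵥ v p = a := by
    simp only [hw, add_dotProduct, smul_dotProduct, smul_eq_mul, hunit, hup]
    ring
  have hww : w ⬝ᵥ w = 1 := by
    simp only [hw, add_dotProduct, dotProduct_add, smul_dotProduct, dotProduct_smul,
      smul_eq_mul, hunit, huu, hpu, hup]
    linear_combination ha2 + hb2
  have hwvj : ∀ j, w ⬝ᵥ v j = a * X p j + b * (u ⬝ᵥ v j) := by
    intro j
    simp only [hw, add_dotProduct, smul_dotProduct, smul_eq_mul, ← hXv]
  have hSw2 : ∑ j, (w ⬝ᵥ v j) * (w ⬝ᵥ v j) = a^2*Lp + b^2*Lq := by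
    have hexp : ∀ j, (w ⬝ᵥ v j) * (w ⬝ᵥ v j)
        = a^2 * (X p j * X p j) + (2*a*b) * (X p j * (u ⬝ᵥ v j))
          + b^2 * ((u ⬝ᵥ v j) * (u ⬝ᵥ v j)) := by
      intro j; rw [hwvj j]; ring
    rw [Finset.sum_congr rfl fun j _ => hexp j]
    rw [Finset.sum_add_distrib, Finset.sum_add_distrib, ← Finset.mul_sum,
      ← Finset.mul_sum, ← Finset.mul_sum, ← hLp, hSpu, hSuu]
    ring
  have hSwX : ∑ j, X p j * (w ⬝ᵥ v j) = Lp * a := by rw [hdot w p, hwvp]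
  set W : Fin n → Fin n → ℝ := Function.update v p w with hW
  have hWp : W p = w := Function.update_self p w v
  have hWj : ∀ j, j ≠ p → W j = v j := fun j hj => Function.update_of_ne hj w v
  have hWunit : ∀ i, W i ⬝ᵥ W i = 1 := by
    intro i
    by_cases h : i = p
    · subst h; rw [hWp, hww]
    · rw [hWj i h]; exact hunit i
  set Y : Matrix (Fin n) (Fin n) ℝ := Matrix.of (fun i j => W i ⬝ᵥ W j) with hYdef
  have hYmem : Y ∈ elliptope n := gram_mem W hWunit
  have hYapp : ∀ i j, Y i j = W i ⬝ᵥ W j := fun i j => rfl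
  have hYoff : ∀ i j, i ≠ p → j ≠ p → Y i j = X i j := by
    intro i j hi hj
    rw [hYapp, hWj i hi, hWj j hj, hXv]
  have hYsym : ∀ i j, Y i j = Y j i := fun i j => by
    rw [hYapp, hYapp, dotProduct_comm]
  have hXpp : X p p = 1 := by rw [hXv]; exact hunit p
  have hYpp : Y p p = 1 := by rw [hYapp, hWp, hww]
  have hYpj : ∀ j, j ≠ p → Y p j = w ⬝ᵥ v j := by
    intro j hj; rw [hYapp, hWp, hWj j hj]
  -- frob Y Y - frob X X
  have hfrobYY : frob Y Y - frob X X = 2 * (b^2 * (Lq - Lp + 1)) := by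
    have hsym1 : ∀ i j, Y i j * Y i j - X i j * X i j
        = Y j i * Y j i - X j i * X j i := fun i j => by
      rw [hYsym i j, hsymX i j]
    have h01 : ∀ i j, i ≠ p → j ≠ p → Y i j * Y i j - X i j * X i j = 0 :=
      fun i j hi hj => by rw [hYoff i j hi hj]; ring
    have hD : ∑ i, ∑ j, (Y i j * Y i j - X i j * X i j)
        = 2 * (∑ j, (Y p j * Y p j - X p j * X p j))
          - (Y p p * Y p p - X p p * X p p) :=
      sum_sum_offdiag p (fun i j => Y i j * Y i j - X i j * X i j) hsym1 h01
    have hfr : frob Y Y - frob X X = ∑ i, ∑ j, (Y i j * Y i j - X i j * X i j) := by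
      rw [frob, frob, ← Finset.sum_sub_distrib]
      exact Finset.sum_congr rfl fun i _ => by rw [← Finset.sum_sub_distrib]
    have hrowsum : ∑ j, (Y p j * Y p j - X p j * X p j)
        = (a^2*Lp + b^2*Lq) - Lp - ((w ⬝ᵥ v p)*(w ⬝ᵥ v p) - 1) := by
      have hterm : ∀ j, Y p j * Y p j - X p j * X p j
          = ((w ⬝ᵥ v j)*(w ⬝ᵥ v j) - X p j * X p j)
            - (if j = p then ((w ⬝ᵥ v p)*(w ⬝ᵥ v p) - 1) else 0) := by
        intro j
        by_cases h : j = p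
        · subst h
          rw [hYpp, hXpp]
          simp
        · rw [hYpj j h]
          simp [h]
      rw [Finset.sum_congr rfl fun j _ => hterm j, Finset.sum_sub_distrib,
        Finset.sum_ite_eq' Finset.univ p, Finset.sum_sub_distrib, ← hLp, hSw2]
      simp
    rw [hfr, hD, hrowsum, hYpp, hXpp, hwvp]
    linear_combination (2*Lp - 2)*ha2 + (2*Lp - 2)*hb2
  have hfrob_lt : frob X X < frob Y Y := by
    have h : 0 < 2 * (b^2 * (Lq - Lp + 1)) := by rw [hb2]; exact arith4 hs0 hL
    linarith [hfrobYY]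
  -- frob (Y-X) (Y-X)
  have hfrobD : frob (Y - X) (Y - X) = 2*((a-1)^2*(Lp-1) + b^2*Lq) := by
    have hsym1 : ∀ i j, (Y i j - X i j) * (Y i j - X i j)
        = (Y j i - X j i) * (Y j i - X j i) := fun i j => by
      rw [hYsym i j, hsymX i j]
    have h01 : ∀ i j, i ≠ p → j ≠ p → (Y i j - X i j) * (Y i j - X i j) = 0 :=
      fun i j hi hj => by rw [hYoff i j hi hj]; ring
    have hD : ∑ i, ∑ j, ((Y i j - X i j) * (Y i j - X i j))
        = 2 * (∑ j, ((Y p j - X p j) * (Y p j - X p j)))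
          - (Y p p - X p p) * (Y p p - X p p) :=
      sum_sum_offdiag p (fun i j => (Y i j - X i j) * (Y i j - X i j)) hsym1 h01
    have hfr : frob (Y - X) (Y - X) = ∑ i, ∑ j, (Y i j - X i j) * (Y i j - X i j) := by
      rw [frob]
      exact Finset.sum_congr rfl fun i _ =>
        Finset.sum_congr rfl fun j _ => by rw [Matrix.sub_apply]
    have hrowsum : ∑ j, (Y p j - X p j) * (Y p j - X p j)
        = ((a^2*Lp + b^2*Lq) - 2*(Lp*a) + Lp) - (a - 1)^2 := by
      have hterm : ∀ j, (Y p j - X p j) * (Y p j - X p j)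
          = ((w ⬝ᵥ v j) * (w ⬝ᵥ v j) - 2*(X p j * (w ⬝ᵥ v j)) + X p j * X p j)
            - (if j = p then (a - 1)^2 else 0) := by
        intro j
        by_cases h : j = p
        · subst h
          rw [hYpp, hXpp, hwvp]
          simp; ring
        · rw [hYpj j h]
          simp [h]; ring
      rw [Finset.sum_congr rfl fun j _ => hterm j, Finset.sum_sub_distrib,
        Finset.sum_ite_eq' Finset.univ p, Finset.sum_add_distrib,
        Finset.sum_sub_distrib, ← Finset.mul_sum, ← hLp, hSw2, hSwX]
      simp
    have hdiag0 : (Y p p - X p p) * (Y p p - X p p) = 0 := by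
      rw [hYpp, hXpp]; ring
    rw [hfr, hD, hrowsum, hdiag0]
    ring
  have hdist : Real.sqrt (frob (Y - X) (Y - X)) < ε := by
    rw [Real.sqrt_lt' hε]
    have hbound : frob (Y - X) (Y - X) ≤ s * K := by
      rw [hfrobD, hK, hb2]
      exact arith2 ham hs0 hs1 hLp1 hLq0
    exact arith3 hbound hsε hs0 hK0
  exact ⟨Y, hYmem, hdist, hfrob_lt⟩

set_option maxHeartbeats 1000000 in
lemma eigen_of_fix (X : Matrix (Fin n) (Fin n) ℝ) (v : Fin n → Fin n → ℝ)
    (hXv : ∀ i j, X i j = v i ⬝ᵥ v j)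
    (hunit : ∀ i, v i ⬝ᵥ v i = 1)
    (hfix : ∀ Y ∈ elliptope n, frob X Y ≤ frob X X) (p : Fin n) :
    (∑ j, X p j • v j) = (∑ j, X p j * X p j) • v p := by
  classical
  have hsymX : ∀ i j, X i j = X j i := fun i j => by rw [hXv, hXv, dotProduct_comm]
  have hXpp : X p p = 1 := by rw [hXv]; exact hunit p
  set Lp : ℝ := ∑ j, X p j * X p j with hLp
  set C : Fin n → ℝ := (∑ j, X p j • v j) - v p with hC
  have hdotC : ∀ w : Fin n → ℝ, w ⬝ᵥ C = (∑ j, X p j * (w ⬝ᵥ v j)) - w ⬝ᵥ v p := by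
    intro w
    rw [hC, dotProduct_sub, dot_sum]
    congr 1
    exact Finset.sum_congr rfl fun j _ => by rw [dotProduct_smul, smul_eq_mul]
  have hvpC : v p ⬝ᵥ C = Lp - 1 := by
    rw [hdotC, hunit, hLp]
    congr 1
    exact Finset.sum_congr rfl fun j _ => by rw [← hXv]
  have hCvp : C ⬝ᵥ v p = Lp - 1 := by rw [dotProduct_comm]; exact hvpC
  -- the variational inequality
  have hstep : ∀ w : Fin n → ℝ, w ⬝ᵥ w = 1 → w ⬝ᵥ C ≤ Lp - 1 := by
    intro w hww
    set W : Fin n → Fin n → ℝ := Function.update v p w with hW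
    have hWp : W p = w := Function.update_self p w v
    have hWj : ∀ j, j ≠ p → W j = v j := fun j hj => Function.update_of_ne hj w v
    have hWunit : ∀ i, W i ⬝ᵥ W i = 1 := by
      intro i
      by_cases h : i = p
      · subst h; rw [hWp]; exact hww
      · rw [hWj i h]; exact hunit i
    set Y : Matrix (Fin n) (Fin n) ℝ := Matrix.of (fun i j => W i ⬝ᵥ W j) with hYdef
    have hYmem : Y ∈ elliptope n := gram_mem W hWunit
    have hYapp : ∀ i j, Y i j = W i ⬝ᵥ W j := fun i j => rfl
    have hYoff : ∀ i j, i ≠ p → j ≠ p → Y i j = X i j := by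
      intro i j hi hj; rw [hYapp, hWj i hi, hWj j hj, hXv]
    have hYsym : ∀ i j, Y i j = Y j i := fun i j => by
      rw [hYapp, hYapp, dotProduct_comm]
    have hYpp : Y p p = 1 := by rw [hYapp, hWp]; exact hww
    have hYpj : ∀ j, j ≠ p → Y p j = w ⬝ᵥ v j := by
      intro j hj; rw [hYapp, hWp, hWj j hj]
    have hsym1 : ∀ i j, X i j * (Y i j - X i j) = X j i * (Y j i - X j i) :=
      fun i j => by rw [hYsym i j, hsymX i j]
    have h01 : ∀ i j, i ≠ p → j ≠ p → X i j * (Y i j - X i j) = 0 :=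
      fun i j hi hj => by rw [hYoff i j hi hj]; ring
    have hD : ∑ i, ∑ j, (X i j * (Y i j - X i j))
        = 2 * (∑ j, (X p j * (Y p j - X p j))) - X p p * (Y p p - X p p) :=
      sum_sum_offdiag p (fun i j => X i j * (Y i j - X i j)) hsym1 h01
    have hfr : frob X Y - frob X X = ∑ i, ∑ j, (X i j * (Y i j - X i j)) := by
      rw [frob, frob, ← Finset.sum_sub_distrib]
      refine Finset.sum_congr rfl fun i _ => ?_
      rw [← Finset.sum_sub_distrib]
      exact Finset.sum_congr rfl fun j _ => by ring
    have hterm : ∀ j, X p j * (Y p j - X p j)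
        = (X p j * (w ⬝ᵥ v j) - X p j * X p j)
          - (if j = p then (w ⬝ᵥ v p - 1) else 0) := by
      intro j
      by_cases h : j = p
      · subst h
        rw [hYpp, hXpp]
        simp
      · rw [hYpj j h]
        simp only [h, if_false]
        ring
    have hrowsum : ∑ j, X p j * (Y p j - X p j)
        = (∑ j, X p j * (w ⬝ᵥ v j)) - Lp - (w ⬝ᵥ v p - 1) := by
      rw [Finset.sum_congr rfl fun j _ => hterm j, Finset.sum_sub_distrib,
        Finset.sum_ite_eq' Finset.univ p, Finset.sum_sub_distrib, ← hLp]
      simp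
    have hfix' := hfix Y hYmem
    have hdiag0 : X p p * (Y p p - X p p) = 0 := by rw [hYpp, hXpp]; ring
    have hfinal : frob X Y - frob X X = 2 * (w ⬝ᵥ C - (Lp - 1)) := by
      rw [hfr, hD, hrowsum, hdiag0, hdotC]
      ring
    linarith [hfix', hfinal]
  -- conclude C = (Lp - 1) • v p
  have hCep : C = (Lp - 1) • v p := by
    by_cases hC0 : C = 0
    · have h1 : Lp - 1 = 0 := by
        rw [← hvpC, hC0, dotProduct_zero]
      rw [hC0, h1, zero_smul]
    · have hCC0 : C ⬝ᵥ C ≠ 0 := fun h => hC0 (dot_self_eq_zero' h)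
      have hCCpos : 0 < C ⬝ᵥ C := lt_of_le_of_ne (dot_self_nonneg C) (Ne.symm hCC0)
      set t : ℝ := Real.sqrt (C ⬝ᵥ C) with ht
      have ht0 : 0 < t := Real.sqrt_pos.mpr hCCpos
      have ht2 : t^2 = C ⬝ᵥ C := Real.sq_sqrt hCCpos.le
      have hwunit : (t⁻¹ • C) ⬝ᵥ (t⁻¹ • C) = 1 := by
        rw [smul_dotProduct, dotProduct_smul, smul_eq_mul, smul_eq_mul, ← ht2]
        field_simp [pow_two]
      have hw := hstep (t⁻¹ • C) hwunit
      rw [smul_dotProduct, smul_eq_mul] at hw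
      have htle : t ≤ Lp - 1 := by
        have h2 : t⁻¹ * (C ⬝ᵥ C) = t := by
          rw [← ht2]; field_simp [pow_two]
        linarith [hw, h2.symm.le, h2.le]
      have hsq : C ⬝ᵥ C ≤ (Lp - 1)^2 := by
        rw [← ht2]
        exact pow_le_pow_left₀ ht0.le htle 2
      have hexp : (C - (Lp-1) • v p) ⬝ᵥ (C - (Lp-1) • v p)
          = C ⬝ᵥ C - (Lp-1)^2 := by
        simp only [sub_dotProduct, dotProduct_sub, smul_dotProduct, dotProduct_smul,
          smul_eq_mul, hvpC, hCvp, hunit]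
        ring
      have hzero : (C - (Lp-1) • v p) ⬝ᵥ (C - (Lp-1) • v p) = 0 := by
        have hge := dot_self_nonneg (C - (Lp-1) • v p)
        linarith [hexp, hsq]
      have := dot_self_eq_zero' hzero
      exact sub_eq_zero.mp this
  have hsum : (∑ j, X p j • v j) = C + v p := by rw [hC]; abel
  rw [hsum, hCep]
  have : (Lp - 1) • v p + v p = Lp • v p := by
    rw [sub_smul, one_smul]; abel
  rw [this]

end Stmt17Aux

open Stmt17Aux in
theorem stmt17 {n : ℕ} (X : Matrix (Fin n) (Fin n) ℝ) (hX : X ∈ elliptope n)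
    (hfix : ∀ Y ∈ elliptope n, frob X Y ≤ frob X X)
    (hnotvertex : ¬∃ v : Fin n → ℝ, (∀ i, v i = 1 ∨ v i = -1) ∧ ∀ i j, X i j = v i * v j) :
    ∀ ε > (0 : ℝ), ∃ Y ∈ elliptope n,
      Real.sqrt (frob (Y - X) (Y - X)) < ε ∧ frob X X < frob Y Y := by
  intro ε hε
  obtain ⟨hpsd, hdiag⟩ := hX
  open scoped MatrixOrder in
  obtain ⟨B, hB⟩ := CStarAlgebra.nonneg_iff_eq_star_mul_self.mp hpsd.nonneg
  set v : Fin n → Fin n → ℝ := fun i k => B k i with hv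
  have hXv : ∀ i j, X i j = v i ⬝ᵥ v j := by
    intro i j
    rw [hB]
    simp [hv, Matrix.star_eq_conjTranspose, Matrix.mul_apply, Matrix.conjTranspose_apply, dotProduct]
  have hunit : ∀ i, v i ⬝ᵥ v i = 1 := fun i => by rw [← hXv]; exact hdiag i
  have E : ∀ i, (∑ j, X i j • v j) = (∑ j, X i j * X i j) • v i :=
    fun i => eigen_of_fix X v hXv hunit hfix i
  have hsymX : ∀ i j, X i j = X j i := fun i j => by rw [hXv, hXv, dotProduct_comm]
  by_cases hex : ∃ a b, (X a b)^2 < 1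
  · obtain ⟨pa, qb, hpq⟩ := hex
    rcases le_total (∑ j, X pa j * X pa j) (∑ j, X qb j * X qb j) with h | h
    · exact main_aux X v hXv hunit E pa qb hpq h hε
    · exact main_aux X v hXv hunit E qb pa (by rw [hsymX qb pa]; exact hpq) h hε
  · exfalso
    apply hnotvertex
    push_neg at hex
    have hbo : ∀ i j, (X i j)^2 ≤ 1 := by
      intro i j
      have h1 : v j ⬝ᵥ v i = X i j := by rw [hXv, dotProduct_comm]
      have h2 : v i ⬝ᵥ v j = X i j := (hXv i j).symm
      have hval : (v j - X i j • v i) ⬝ᵥ (v j - X i j • v i) = 1 - (X i j)^2 := by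
        simp only [sub_dotProduct, dotProduct_sub, smul_dotProduct, dotProduct_smul,
          smul_eq_mul, hunit, h1, h2]
        ring
      have hge := dot_self_nonneg (v j - X i j • v i)
      linarith [hval]
    have hone : ∀ a b, (X a b)^2 = 1 := fun a b => le_antisymm (hbo a b) (hex a b)
    rcases Nat.eq_zero_or_pos n with h0 | h0
    · subst h0; exact ⟨Fin.elim0, fun i => i.elim0, fun i => i.elim0⟩
    · set i0 : Fin n := ⟨0, h0⟩
      have hvi : ∀ i, v i = X i0 i • v i0 := by
        intro i
        have hval : (v i - X i0 i • v i0) ⬝ᵥ (v i - X i0 i • v i0)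
            = 1 - (X i0 i)^2 := by
          have h1 : v i ⬝ᵥ v i0 = X i0 i := by rw [hsymX, hXv, dotProduct_comm]
          have h2 : v i0 ⬝ᵥ v i = X i0 i := by rw [← hXv]
          simp only [sub_dotProduct, dotProduct_sub, smul_dotProduct, dotProduct_smul,
            smul_eq_mul, hunit, h1, h2]
          ring
        rw [hone i0 i] at hval
        have hz := dot_self_eq_zero' (by rw [hval]; ring)
        exact sub_eq_zero.mp hz
      refine ⟨fun i => X i0 i, fun i => ?_, fun i j => ?_⟩
      · have h := hone i0 i
        have hf : (X i0 i - 1) * (X i0 i + 1) = 0 := by linear_combination h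
        rcases mul_eq_zero.mp hf with h' | h'
        · left; linarith
        · right; linarith
      · rw [hXv i j, hvi i, hvi j]
        simp only [smul_dotProduct, dotProduct_smul, smul_eq_mul, hunit i0]
        ring
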